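/- Let G ∈ ℝ^{n×n} be symmetric PSD with Tr(G) = n, and let z ∈ ℝⁿ be a random vector with ‖z‖² ≤ 2n/m almost surely and E[zzᵀ] = G/m. Then the matrix E = (1/m)G - zzᵀ satisfies E[E²] ⪯ (1/m²)(2nG - G²) in the Loewner order, and hence ‖E[E²]‖₂ ≤ 3n²/m². -/

import Mathlib

open Matrix BigOperators MeasureTheory

/-- Euclidean norm of a vector in `ℝⁿ`. -/
noncomputable def eunorm {n : ℕ} (x : Fin n → ℝ) : ℝ := Real.sqrt (∑ i, (x i) ^ 2)

/-- Spectral (operator) norm of a real matrix: supremum of `‖A x‖` over unit vectors `x`. -/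
noncomputable def specNorm {n m : ℕ} (A : Matrix (Fin n) (Fin m) ℝ) : ℝ :=
  sSup {c : ℝ | ∃ x : Fin m → ℝ, eunorm x = 1 ∧ c = eunorm (A.mulVec x)}

/-- Frobenius norm of a real matrix. -/
noncomputable def frobNorm {n m : ℕ} (A : Matrix (Fin n) (Fin m) ℝ) : ℝ :=
  Real.sqrt (∑ i, ∑ j, (A i j) ^ 2)

/-- The four Penrose conditions: `Ad` is the Moore–Penrose pseudoinverse of `A`. -/
def IsMoorePenrose {n m : ℕ} (A : Matrix (Fin n) (Fin m) ℝ)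
    (Ad : Matrix (Fin m) (Fin n) ℝ) : Prop :=
  A * Ad * A = A ∧ Ad * A * Ad = Ad ∧ (A * Ad)ᵀ = A * Ad ∧ (Ad * A)ᵀ = Ad * A

/-- `Ak` is a best rank-`k` approximation of `A` in Frobenius norm. -/
def IsBestRankApprox {n m : ℕ} (k : ℕ) (A Ak : Matrix (Fin n) (Fin m) ℝ) : Prop :=
  Ak.rank ≤ k ∧ ∀ C : Matrix (Fin n) (Fin m) ℝ, C.rank ≤ k → frobNorm (A - Ak) ≤ frobNorm (A - C)


section Helpers

variable {n : ℕ}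

lemma psd_quad_nonneg {A : Matrix (Fin n) (Fin n) ℝ} (hA : A.PosSemidef) (x : Fin n → ℝ) :
    0 ≤ x ⬝ᵥ A *ᵥ x := by
  have := hA.dotProduct_mulVec_nonneg x
  simpa using this

lemma psd_cs {A : Matrix (Fin n) (Fin n) ℝ} (hA : A.PosSemidef) (x y : Fin n → ℝ) :
    (x ⬝ᵥ A *ᵥ y) ^ 2 ≤ (x ⬝ᵥ A *ᵥ x) * (y ⬝ᵥ A *ᵥ y) := by
  obtain ⟨B, rfl⟩ : ∃ B : Matrix (Fin n) (Fin n) ℝ, A = Bᴴ * B := by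
    open scoped MatrixOrder in
    exact CStarAlgebra.nonneg_iff_eq_star_mul_self.mp hA.nonneg
  have key : ∀ u v : Fin n → ℝ, u ⬝ᵥ (Bᴴ * B) *ᵥ v = (B *ᵥ u) ⬝ᵥ (B *ᵥ v) := by
    intro u v
    rw [← Matrix.mulVec_mulVec, Matrix.dotProduct_mulVec,
      Matrix.conjTranspose_eq_transpose_of_trivial, Matrix.vecMul_transpose]
  rw [key, key, key]
  calc ((B *ᵥ x) ⬝ᵥ (B *ᵥ y)) ^ 2 ≤ (∑ i, (B *ᵥ x) i ^2) * (∑ i, (B *ᵥ y) i ^2) :=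
        Finset.sum_mul_sq_le_sq_mul_sq _ _ _
    _ = ((B *ᵥ x) ⬝ᵥ (B *ᵥ x)) * ((B *ᵥ y) ⬝ᵥ (B *ᵥ y)) := by
        simp [dotProduct, pow_two]

lemma single_quad (A : Matrix (Fin n) (Fin n) ℝ) (i j : Fin n) :
    (Pi.single i 1 : Fin n → ℝ) ⬝ᵥ A *ᵥ (Pi.single j 1) = A i j := by
  simp [Matrix.mulVec_single, dotProduct, Pi.single_apply, Finset.sum_ite_eq]

lemma psd_entry_sq {A : Matrix (Fin n) (Fin n) ℝ} (hA : A.PosSemidef) (i j : Fin n) :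
    (A i j) ^ 2 ≤ A i i * A j j := by
  have := psd_cs hA (Pi.single i 1) (Pi.single j 1)
  simpa [single_quad] using this

lemma psd_diag_nonneg {A : Matrix (Fin n) (Fin n) ℝ} (hA : A.PosSemidef) (i : Fin n) :
    0 ≤ A i i := by
  have := psd_quad_nonneg hA (Pi.single i 1)
  simpa [single_quad] using this

lemma psd_diag_le_trace {A : Matrix (Fin n) (Fin n) ℝ} (hA : A.PosSemidef) (i : Fin n) :
    A i i ≤ A.trace := by
  rw [Matrix.trace]
  exact Finset.single_le_sum (fun j _ => psd_diag_nonneg hA j) (Finset.mem_univ i)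

lemma psd_quad_le_trace {A : Matrix (Fin n) (Fin n) ℝ} (hA : A.PosSemidef) (x : Fin n → ℝ) :
    x ⬝ᵥ A *ᵥ x ≤ A.trace * (∑ i, x i ^ 2) := by
  obtain ⟨B, rfl⟩ : ∃ B : Matrix (Fin n) (Fin n) ℝ, A = Bᴴ * B := by
    open scoped MatrixOrder in
    exact CStarAlgebra.nonneg_iff_eq_star_mul_self.mp hA.nonneg
  have key : x ⬝ᵥ (Bᴴ * B) *ᵥ x = (B *ᵥ x) ⬝ᵥ (B *ᵥ x) := by
    rw [← Matrix.mulVec_mulVec, Matrix.dotProduct_mulVec,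
      Matrix.conjTranspose_eq_transpose_of_trivial, Matrix.vecMul_transpose]
  have htr : (Bᴴ * B).trace = ∑ j, ∑ i, B i j ^ 2 := by
    simp [Matrix.trace, Matrix.mul_apply, Matrix.diag, pow_two]
  rw [key, htr]
  have h1 : (B *ᵥ x) ⬝ᵥ (B *ᵥ x) = ∑ i, (∑ j, B i j * x j) ^ 2 := by
    simp [dotProduct, Matrix.mulVec, pow_two]
  rw [h1]
  calc ∑ i, (∑ j, B i j * x j) ^ 2 ≤ ∑ i, (∑ j, B i j ^ 2) * (∑ j, x j ^ 2) :=
        Finset.sum_le_sum fun i _ => Finset.sum_mul_sq_le_sq_mul_sq _ _ _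
    _ = (∑ j, ∑ i, B i j ^ 2) * ∑ i, x i ^ 2 := by
        rw [← Finset.sum_mul, Finset.sum_comm]

lemma eunorm_sq (x : Fin n → ℝ) : eunorm x ^ 2 = ∑ i, x i ^ 2 :=
  Real.sq_sqrt (Finset.sum_nonneg fun i _ => sq_nonneg _)

lemma specNorm_le_of_quad {A : Matrix (Fin n) (Fin n) ℝ} (hA : A.PosSemidef) {c : ℝ}
    (hc : 0 ≤ c) (h : ∀ x : Fin n → ℝ, eunorm x = 1 → x ⬝ᵥ A *ᵥ x ≤ c) :
    specNorm A ≤ c := by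
  apply Real.sSup_le _ hc
  rintro v ⟨x, hx, rfl⟩
  set y := A *ᵥ x with hy
  have hS : eunorm y ^ 2 = y ⬝ᵥ y := by rw [eunorm_sq]; simp [dotProduct, pow_two]
  have hxx : ∑ i, x i ^ 2 = 1 := by rw [← eunorm_sq, hx]; norm_num
  have hyAx : y ⬝ᵥ y = y ⬝ᵥ A *ᵥ x := rfl
  have hquad : ∀ u : Fin n → ℝ, u ⬝ᵥ A *ᵥ u ≤ c * ∑ i, u i ^ 2 := by
    intro u
    rcases eq_or_ne (∑ i, u i ^ 2) 0 with h0 | h0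
    · have : ∀ i, u i = 0 := by
        intro i
        have := (Finset.sum_eq_zero_iff_of_nonneg (fun i _ => sq_nonneg (u i))).mp h0 i
          (Finset.mem_univ i)
        exact pow_eq_zero_iff (two_ne_zero) |>.mp this
      have hu : u = 0 := funext this
      simp [hu, h0]
    · have hpos : 0 < ∑ i, u i ^ 2 :=
        lt_of_le_of_ne (Finset.sum_nonneg fun i _ => sq_nonneg _) (Ne.symm h0)
      set s := Real.sqrt (∑ i, u i ^ 2) with hs
      have hspos : 0 < s := Real.sqrt_pos.mpr hpos
      have := h (s⁻¹ • u) (by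
        rw [eunorm]
        have : ∑ i, (s⁻¹ * u i) ^ 2 = s⁻¹ ^ 2 * ∑ i, u i ^ 2 := by
          rw [Finset.mul_sum]; congr 1; ext i; ring
        simp only [Pi.smul_apply, smul_eq_mul, this]
        rw [Real.sqrt_mul (sq_nonneg _), Real.sqrt_sq (le_of_lt (inv_pos.mpr hspos))]
        rw [← hs]
        field_simp)
      have hsc : (s⁻¹ • u) ⬝ᵥ A *ᵥ (s⁻¹ • u) = s⁻¹ ^ 2 * (u ⬝ᵥ A *ᵥ u) := by
        rw [Matrix.mulVec_smul, dotProduct_smul, smul_dotProduct]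
        simp [smul_eq_mul, pow_two]; ring
      rw [hsc] at this
      have hs2 : s ^ 2 = ∑ i, u i ^ 2 := Real.sq_sqrt hpos.le
      have := mul_le_mul_of_nonneg_left this (le_of_lt (pow_pos hspos 2))
      rw [← mul_assoc] at this
      have hss : s ^ 2 * s⁻¹ ^ 2 = 1 := by field_simp
      rw [hss, one_mul] at this
      calc u ⬝ᵥ A *ᵥ u ≤ s ^ 2 * c := this
        _ = c * ∑ i, u i ^ 2 := by rw [hs2]; ring
  have hycs : (y ⬝ᵥ A *ᵥ x) ^ 2 ≤ (y ⬝ᵥ A *ᵥ y) * (x ⬝ᵥ A *ᵥ x) := psd_cs hA y x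
  have h1 : y ⬝ᵥ A *ᵥ y ≤ c * ∑ i, y i ^ 2 := hquad y
  have h2 : x ⬝ᵥ A *ᵥ x ≤ c := h x hx
  have hx2 : 0 ≤ x ⬝ᵥ A *ᵥ x := psd_quad_nonneg hA x
  have hy2 : 0 ≤ y ⬝ᵥ A *ᵥ y := psd_quad_nonneg hA y
  have hynn : 0 ≤ ∑ i, y i ^ 2 := Finset.sum_nonneg fun i _ => sq_nonneg _
  have key : ((∑ i, y i ^ 2)) ^ 2 ≤ c ^ 2 * ∑ i, y i ^ 2 := by
    have hyy : y ⬝ᵥ y = ∑ i, y i ^ 2 := by simp [dotProduct, pow_two]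
    calc (∑ i, y i ^ 2) ^ 2 = (y ⬝ᵥ A *ᵥ x) ^ 2 := by rw [← hyAx, hyy]
      _ ≤ (y ⬝ᵥ A *ᵥ y) * (x ⬝ᵥ A *ᵥ x) := hycs
      _ ≤ (c * ∑ i, y i ^ 2) * c := by
          apply mul_le_mul h1 h2 hx2
          exact le_trans hy2 h1
      _ = c ^ 2 * ∑ i, y i ^ 2 := by ring
  have : ∑ i, y i ^ 2 ≤ c ^ 2 := by
    rcases eq_or_lt_of_le hynn with h0 | h0
    · rw [← h0]; positivity
    · have key' : (∑ i, y i ^ 2) * (∑ i, y i ^ 2) ≤ c ^ 2 * ∑ i, y i ^ 2 := by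
        nlinarith [key]
      exact le_of_mul_le_mul_right key' h0
  rw [eunorm]
  calc Real.sqrt (∑ i, y i ^ 2) ≤ Real.sqrt (c ^ 2) := Real.sqrt_le_sqrt this
    _ = c := Real.sqrt_sq hc

lemma dot_integral {Ω : Type*} [MeasurableSpace Ω] (μ : Measure Ω)
    (A : Matrix (Fin n) (Fin n) ℝ) (F : Ω → Matrix (Fin n) (Fin n) ℝ)
    (hA : ∀ i j, A i j = ∫ ω, F ω i j ∂μ)
    (hF : ∀ i j, Integrable (fun ω => F ω i j) μ) (x y : Fin n → ℝ) :
    x ⬝ᵥ A *ᵥ y = ∫ ω, x ⬝ᵥ (F ω) *ᵥ y ∂μ := by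
  have expand : ∀ M : Matrix (Fin n) (Fin n) ℝ,
      x ⬝ᵥ M *ᵥ y = ∑ i, ∑ j, x i * (M i j * y j) := by
    intro M; simp [dotProduct, Matrix.mulVec, Finset.mul_sum]
  have hint1 : ∀ i j, Integrable (fun ω => x i * (F ω i j * y j)) μ :=
    fun i j => ((hF i j).mul_const (y j)).const_mul (x i)
  have step : ∀ i j, x i * (A i j * y j) = ∫ ω, x i * (F ω i j * y j) ∂μ := by
    intro i j
    rw [hA i j, ← integral_mul_const, ← integral_const_mul]
  calc x ⬝ᵥ A *ᵥ y = ∑ i, ∑ j, x i * (A i j * y j) := expand A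
    _ = ∑ i, ∑ j, ∫ ω, x i * (F ω i j * y j) ∂μ :=
        Finset.sum_congr rfl fun i _ => Finset.sum_congr rfl fun j _ => step i j
    _ = ∑ i, ∫ ω, ∑ j, x i * (F ω i j * y j) ∂μ :=
        Finset.sum_congr rfl fun i _ => (integral_finset_sum _ (fun j _ => hint1 i j)).symm
    _ = ∫ ω, ∑ i, ∑ j, x i * (F ω i j * y j) ∂μ :=
        (integral_finset_sum _ (fun i _ => integrable_finset_sum _ (fun j _ => hint1 i j))).symm
    _ = ∫ ω, x ⬝ᵥ (F ω) *ᵥ y ∂μ := by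
        congr 1; funext ω; exact (expand (F ω)).symm

lemma sum_expand_zz {Ω : Type*} (z : Ω → Fin n → ℝ) (x g : Fin n → ℝ) (ω : Ω) :
    (z ω ⬝ᵥ x) * (g ⬝ᵥ z ω) = ∑ i, ∑ j, (x i * g j) * (z ω i * z ω j) := by
  simp only [dotProduct, Finset.sum_mul_sum]
  exact Finset.sum_congr rfl fun i _ => Finset.sum_congr rfl fun j _ => by ring

lemma int_quadz {Ω : Type*} [MeasurableSpace Ω] (μ : Measure Ω) (z : Ω → Fin n → ℝ)
    (c : Fin n → Fin n → ℝ) (G : Matrix (Fin n) (Fin n) ℝ) (mr : ℝ)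
    (hzint : ∀ i j, Integrable (fun ω => z ω i * z ω j) μ)
    (hexp : ∀ i j, ∫ ω, z ω i * z ω j ∂μ = G i j / mr) :
    ∫ ω, ∑ i, ∑ j, c i j * (z ω i * z ω j) ∂μ = ∑ i, ∑ j, c i j * (G i j / mr) := by
  rw [integral_finset_sum _ (fun i _ => integrable_finset_sum _
    (fun j _ => (hzint i j).const_mul (c i j)))]
  refine Finset.sum_congr rfl fun i _ => ?_
  rw [integral_finset_sum _ (fun j _ => (hzint i j).const_mul (c i j))]
  refine Finset.sum_congr rfl fun j _ => ?_
  rw [integral_const_mul, hexp]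

lemma sum_coeff_gg {G : Matrix (Fin n) (Fin n) ℝ} (hGs : Gᵀ = G) (x : Fin n → ℝ) (mr : ℝ) :
    ∑ i, ∑ j, (x i * (G *ᵥ x) j) * (G i j / mr) = (1 / mr) * ((G *ᵥ x) ⬝ᵥ (G *ᵥ x)) := by
  set g := G *ᵥ x with hg
  have hsum : ∀ j, ∑ i, x i * G i j = g j := by
    intro j
    rw [hg]
    simp only [Matrix.mulVec, dotProduct]
    exact Finset.sum_congr rfl fun i _ => by
      rw [show G j i = G i j from by conv_lhs => rw [← hGs, Matrix.transpose_apply]]; ring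
  rw [Finset.sum_comm]
  have : ∀ j, ∑ i, (x i * g j) * (G i j / mr) = (g j / mr) * (∑ i, x i * G i j) := by
    intro j; rw [Finset.mul_sum]; exact Finset.sum_congr rfl fun i _ => by ring
  simp_rw [this, hsum]
  simp only [dotProduct, Finset.mul_sum]
  exact Finset.sum_congr rfl fun j _ => by ring

lemma sum_coeff_xg (G : Matrix (Fin n) (Fin n) ℝ) (x : Fin n → ℝ) (mr : ℝ) :
    ∑ i, ∑ j, (x i * x j) * (G i j / mr) = (1 / mr) * (x ⬝ᵥ (G *ᵥ x)) := by
  simp only [dotProduct, Matrix.mulVec, Finset.mul_sum]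
  exact Finset.sum_congr rfl fun i _ => Finset.sum_congr rfl fun j _ => by ring

lemma mulVec_E {G : Matrix (Fin n) (Fin n) ℝ} (z x : Fin n → ℝ) (c : ℝ) :
    (c • G - Matrix.vecMulVec z z) *ᵥ x = c • (G *ᵥ x) - (z ⬝ᵥ x) • z := by
  funext i
  simp only [Matrix.mulVec, dotProduct, Matrix.sub_apply, Matrix.smul_apply,
    Matrix.vecMulVec_apply, Pi.sub_apply, Pi.smul_apply, smul_eq_mul, Finset.mul_sum]
  rw [Finset.sum_mul, ← Finset.sum_sub_distrib]
  exact Finset.sum_congr rfl fun j _ => by ring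

lemma dot_expand_sq (g z : Fin n → ℝ) (c t : ℝ) :
    (c • g - t • z) ⬝ᵥ (c • g - t • z)
      = c ^ 2 * (g ⬝ᵥ g) - 2 * c * (t * (g ⬝ᵥ z)) + t ^ 2 * (z ⬝ᵥ z) := by
  simp only [sub_dotProduct, dotProduct_sub, smul_dotProduct,
    dotProduct_smul, smul_eq_mul]
  rw [dotProduct_comm z g]
  ring

end Helpers

/-- Let `G` be symmetric PSD with `Tr(G) = n`, and let `z` be a random vector
with `‖z‖² ≤ 2n/m` a.s. and `E[zzᵀ] = G/m`. Then `E = (1/m)G - zzᵀ` satisfies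
`E[E²] ⪯ (1/m²)(2nG - G²)` in the Loewner order and `‖E[E²]‖₂ ≤ 3n²/m²`. -/
theorem bernstein_variance_bound {n m : ℕ} (hm : 0 < m)
    {Ω : Type*} [MeasurableSpace Ω] (μ : Measure Ω) [IsProbabilityMeasure μ]
    (G : Matrix (Fin n) (Fin n) ℝ) (hG : G.PosSemidef) (htr : G.trace = (n : ℝ))
    (z : Ω → Fin n → ℝ) (hmeas : ∀ i, Measurable fun ω => z ω i)
    (hbound : ∀ᵐ ω ∂μ, (eunorm (z ω)) ^ 2 ≤ 2 * n / m)
    (hexp : ∀ i j, ∫ ω, z ω i * z ω j ∂μ = G i j / m)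
    (EE2 : Matrix (Fin n) (Fin n) ℝ)
    (hEE2 : EE2 = Matrix.of fun i j => ∫ ω,
      ((((1 / (m : ℝ)) • G - Matrix.vecMulVec (z ω) (z ω)) *
        ((1 / (m : ℝ)) • G - Matrix.vecMulVec (z ω) (z ω))) i j) ∂μ) :
    ((1 / (m : ℝ) ^ 2) • ((2 * (n : ℝ)) • G - G * G) - EE2).PosSemidef ∧
      specNorm EE2 ≤ 3 * n ^ 2 / m ^ 2 := by
  have hmr : (0:ℝ) < (m:ℝ) := by exact_mod_cast hm
  have hnn : (0:ℝ) ≤ (n:ℝ) := Nat.cast_nonneg n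
  have hnm0 : (0:ℝ) ≤ 2 * n / m := by positivity
  have hGs : Gᵀ = G := by
    have h := hG.1.eq
    rwa [Matrix.conjTranspose_eq_transpose_of_trivial] at h
  set E : Ω → Matrix (Fin n) (Fin n) ℝ :=
    fun ω => (1 / (m : ℝ)) • G - Matrix.vecMulVec (z ω) (z ω) with hEdef
  set B : Matrix (Fin n) (Fin n) ℝ :=
    (1 / (m : ℝ) ^ 2) • ((2 * (n : ℝ)) • G - G * G) with hBdef
  -- entries of EE2
  have hEntry : ∀ i j, EE2 i j = ∫ ω, (E ω * E ω) i j ∂μ := by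
    intro i j
    rw [hEE2]
    simp only [Matrix.of_apply, hEdef]
  -- entrywise formula for E
  have hEapp : ∀ ω i j, E ω i j = (1/(m:ℝ)) * G i j - z ω i * z ω j := by
    intro ω i j
    simp [hEdef, Matrix.vecMulVec_apply]
  -- a.e. bound for ∑ z²
  have hzsum : ∀ᵐ ω ∂μ, ∑ i, z ω i ^ 2 ≤ 2 * n / m := by
    filter_upwards [hbound] with ω hω
    rwa [eunorm_sq] at hω
  have hzz : ∀ᵐ ω ∂μ, ∀ i j, |z ω i * z ω j| ≤ 2 * n / m := by
    filter_upwards [hzsum] with ω hω i j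
    have hi : ∀ k, z ω k ^ 2 ≤ 2 * n / m := fun k =>
      le_trans (Finset.single_le_sum (fun l _ => sq_nonneg (z ω l)) (Finset.mem_univ k)) hω
    have h2 : (z ω i * z ω j) ^ 2 ≤ (2*n/m) * (2*n/m) := by
      rw [mul_pow]; exact mul_le_mul (hi i) (hi j) (sq_nonneg _) hnm0
    have := Real.abs_le_sqrt h2
    rwa [Real.sqrt_mul_self hnm0] at this
  -- G entry bounds
  have hGd : ∀ i, 0 ≤ G i i := psd_diag_nonneg hG
  have hGdn : ∀ i, G i i ≤ n := fun i => htr ▸ psd_diag_le_trace hG i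
  have hGe : ∀ i j, |G i j| ≤ n := by
    intro i j
    have h1 : (G i j) ^ 2 ≤ (n:ℝ) * n := le_trans (psd_entry_sq hG i j)
      (mul_le_mul (hGdn i) (hGdn j) (hGd j) hnn)
    have := Real.abs_le_sqrt h1
    rwa [Real.sqrt_mul_self hnn] at this
  -- integrability of z products
  have hzint : ∀ i j, Integrable (fun ω => z ω i * z ω j) μ := by
    intro i j
    refine Integrable.mono' (integrable_const (2*(n:ℝ)/(m:ℝ)))
      (((hmeas i).mul (hmeas j)).aestronglyMeasurable) ?_
    filter_upwards [hzz] with ω hω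
    rw [Real.norm_eq_abs]; exact hω i j
  -- integrability of entries of E²
  have hEsq : ∀ ω i j, (E ω * E ω) i j
      = ∑ k, ((1/(m:ℝ)) * G i k - z ω i * z ω k) * ((1/(m:ℝ)) * G k j - z ω k * z ω j) := by
    intro ω i j
    rw [Matrix.mul_apply]
    exact Finset.sum_congr rfl fun k _ => by rw [hEapp, hEapp]
  have hEbd : ∀ᵐ ω ∂μ, ∀ i j, |E ω i j| ≤ 3 * n / m := by
    filter_upwards [hzz] with ω hω i j
    rw [hEapp]
    calc |(1/(m:ℝ)) * G i j - z ω i * z ω j| ≤ |(1/(m:ℝ)) * G i j| + |z ω i * z ω j| :=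
          abs_sub ((1/(m:ℝ)) * G i j) (z ω i * z ω j)
      _ ≤ (1/(m:ℝ)) * n + 2 * n / m := by
          apply add_le_add _ (hω i j)
          rw [abs_mul, abs_of_pos (by positivity : (0:ℝ) < 1/(m:ℝ))]
          exact mul_le_mul_of_nonneg_left (hGe i j) (by positivity)
      _ = 3 * n / m := by field_simp; ring
  have hEint : ∀ i j, Integrable (fun ω => (E ω * E ω) i j) μ := by
    intro i j
    have hmeq : (fun ω => (E ω * E ω) i j) = fun ω =>
        ∑ k, ((1/(m:ℝ)) * G i k - z ω i * z ω k) * ((1/(m:ℝ)) * G k j - z ω k * z ω j) :=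
      funext fun ω => hEsq ω i j
    refine Integrable.mono' (integrable_const ((n:ℝ) * (3*n/m) ^ 2)) ?_ ?_
    · rw [hmeq]
      exact (Finset.measurable_sum _ fun k _ =>
        ((measurable_const.sub ((hmeas i).mul (hmeas k))).mul
          (measurable_const.sub ((hmeas k).mul (hmeas j))))).aestronglyMeasurable
    · filter_upwards [hEbd] with ω hω
      rw [Real.norm_eq_abs, hEsq ω i j]
      calc |∑ k, ((1/(m:ℝ)) * G i k - z ω i * z ω k) * ((1/(m:ℝ)) * G k j - z ω k * z ω j)|
          ≤ ∑ k, |((1/(m:ℝ)) * G i k - z ω i * z ω k) * ((1/(m:ℝ)) * G k j - z ω k * z ω j)| :=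
            Finset.abs_sum_le_sum_abs _ _
        _ ≤ ∑ _k : Fin n, (3*(n:ℝ)/(m:ℝ)) ^ 2 := by
            refine Finset.sum_le_sum fun k _ => ?_
            rw [abs_mul, pow_two]
            have h1 := hω i k
            have h2 := hω k j
            rw [hEapp] at h1 h2
            exact mul_le_mul h1 h2 (abs_nonneg _) (by positivity)
        _ = (n:ℝ) * (3*(n:ℝ)/(m:ℝ)) ^ 2 := by
            rw [Finset.sum_const, Finset.card_univ, Fintype.card_fin, nsmul_eq_mul]
  -- quadratic form of EE2 as integral
  have hkey : ∀ x : Fin n → ℝ, x ⬝ᵥ EE2 *ᵥ x = ∫ ω, x ⬝ᵥ (E ω * E ω) *ᵥ x ∂μ :=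
    fun x => dot_integral μ EE2 (fun ω => E ω * E ω) hEntry hEint x x
  -- symmetry of E
  have hEsym : ∀ ω, (E ω)ᵀ = E ω := by
    intro ω
    funext i j
    rw [Matrix.transpose_apply, hEapp, hEapp]
    rw [show G j i = G i j from by conv_lhs => rw [← hGs, Matrix.transpose_apply]]
    ring
  -- quadratic form pointwise is a square
  have hquadE : ∀ (x : Fin n → ℝ) ω, x ⬝ᵥ (E ω * E ω) *ᵥ x = (E ω *ᵥ x) ⬝ᵥ (E ω *ᵥ x) := by
    intro x ω
    rw [← Matrix.mulVec_mulVec, Matrix.dotProduct_mulVec]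
    congr 1
    conv_lhs => rw [← hEsym ω]
    rw [Matrix.vecMul_transpose]
  -- EE2 quad nonneg
  have hEE2quad : ∀ x : Fin n → ℝ, 0 ≤ x ⬝ᵥ EE2 *ᵥ x := by
    intro x
    rw [hkey x]
    apply integral_nonneg
    intro ω
    show (0:ℝ) ≤ x ⬝ᵥ (E ω * E ω) *ᵥ x
    rw [hquadE]
    exact Finset.sum_nonneg fun i _ => mul_self_nonneg _
  -- symmetry of EE2 and B
  have hE2symm : ∀ ω i j, (E ω * E ω) i j = (E ω * E ω) j i := by
    intro ω i j
    have h : (E ω * E ω)ᵀ = E ω * E ω := by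
      rw [Matrix.transpose_mul, hEsym]
    conv_rhs => rw [← h, Matrix.transpose_apply]
  have hEE2s : EE2ᵀ = EE2 := by
    funext i j
    rw [Matrix.transpose_apply, hEntry, hEntry]
    congr 1
    funext ω
    exact hE2symm ω j i
  have hBs : Bᵀ = B := by
    rw [hBdef, Matrix.transpose_smul, Matrix.transpose_sub, Matrix.transpose_smul,
      Matrix.transpose_mul, hGs]
  -- the main integral inequality : ∀ x, x ⬝ᵥ EE2 *ᵥ x ≤ x ⬝ᵥ B *ᵥ x
  have hmain : ∀ x : Fin n → ℝ, x ⬝ᵥ EE2 *ᵥ x ≤ x ⬝ᵥ B *ᵥ x := by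
    intro x
    set g : Fin n → ℝ := G *ᵥ x with hg
    -- pointwise expansion
    have hQ : ∀ ω, x ⬝ᵥ (E ω * E ω) *ᵥ x
        = (1/(m:ℝ)) ^ 2 * (g ⬝ᵥ g) - 2 * (1/(m:ℝ)) * ((z ω ⬝ᵥ x) * (g ⬝ᵥ z ω))
          + (z ω ⬝ᵥ x) ^ 2 * (z ω ⬝ᵥ z ω) := by
      intro ω
      rw [hquadE, hEdef]
      have := mulVec_E (G := G) (z ω) x (1/(m:ℝ))
      rw [this, ← hg, dot_expand_sq]
    -- integrable pieces
    have hu_eq : ∀ ω, (z ω ⬝ᵥ x) * (g ⬝ᵥ z ω) = ∑ i, ∑ j, (x i * g j) * (z ω i * z ω j) :=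
      sum_expand_zz z x g
    have hu_int : Integrable (fun ω => (z ω ⬝ᵥ x) * (g ⬝ᵥ z ω)) μ := by
      rw [show (fun ω => (z ω ⬝ᵥ x) * (g ⬝ᵥ z ω))
          = fun ω => ∑ i, ∑ j, (x i * g j) * (z ω i * z ω j) from funext hu_eq]
      exact integrable_finset_sum _ fun i _ => integrable_finset_sum _
        fun j _ => (hzint i j).const_mul _
    have hu_val : ∫ ω, (z ω ⬝ᵥ x) * (g ⬝ᵥ z ω) ∂μ = (1/(m:ℝ)) * (g ⬝ᵥ g) := by
      rw [show (fun ω => (z ω ⬝ᵥ x) * (g ⬝ᵥ z ω))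
          = fun ω => ∑ i, ∑ j, (x i * g j) * (z ω i * z ω j) from funext hu_eq]
      rw [int_quadz μ z _ G (m:ℝ) hzint hexp]
      exact sum_coeff_gg hGs x (m:ℝ)
    have ht_eq : ∀ ω, (z ω ⬝ᵥ x) ^ 2 = ∑ i, ∑ j, (x i * x j) * (z ω i * z ω j) := by
      intro ω
      rw [pow_two]
      have := sum_expand_zz z x x ω
      rwa [dotProduct_comm x (z ω)] at this
    have ht_int : Integrable (fun ω => (z ω ⬝ᵥ x) ^ 2) μ := by
      rw [show (fun ω => (z ω ⬝ᵥ x) ^ 2)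
          = fun ω => ∑ i, ∑ j, (x i * x j) * (z ω i * z ω j) from funext ht_eq]
      exact integrable_finset_sum _ fun i _ => integrable_finset_sum _
        fun j _ => (hzint i j).const_mul _
    have ht_val : ∫ ω, (z ω ⬝ᵥ x) ^ 2 ∂μ = (1/(m:ℝ)) * (x ⬝ᵥ g) := by
      rw [show (fun ω => (z ω ⬝ᵥ x) ^ 2)
          = fun ω => ∑ i, ∑ j, (x i * x j) * (z ω i * z ω j) from funext ht_eq]
      rw [int_quadz μ z _ G (m:ℝ) hzint hexp]
      exact sum_coeff_xg G x (m:ℝ)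
    have hzz_eq : ∀ ω, z ω ⬝ᵥ z ω = ∑ i, z ω i ^ 2 := by
      intro ω; simp [dotProduct, pow_two]
    -- bound on third piece
    have hX : (0:ℝ) ≤ ∑ i, x i ^ 2 := Finset.sum_nonneg fun i _ => sq_nonneg _
    have hv_bd : ∀ᵐ ω ∂μ, ‖(z ω ⬝ᵥ x) ^ 2 * (z ω ⬝ᵥ z ω)‖ ≤ (2*n/m) * ((2*n/m) * ∑ i, x i ^ 2) := by
      filter_upwards [hzsum] with ω hω
      have ht2 : (z ω ⬝ᵥ x) ^ 2 ≤ (2*n/m) * ∑ i, x i ^ 2 := by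
        calc (z ω ⬝ᵥ x) ^ 2 ≤ (∑ i, z ω i ^ 2) * ∑ i, x i ^ 2 :=
            Finset.sum_mul_sq_le_sq_mul_sq _ _ _
          _ ≤ (2*n/m) * ∑ i, x i ^ 2 := mul_le_mul_of_nonneg_right hω hX
      have hzznn : 0 ≤ z ω ⬝ᵥ z ω := by
        rw [hzz_eq]; exact Finset.sum_nonneg fun i _ => sq_nonneg _
      rw [Real.norm_eq_abs, abs_of_nonneg (mul_nonneg (sq_nonneg _) hzznn)]
      calc (z ω ⬝ᵥ x) ^ 2 * (z ω ⬝ᵥ z ω) ≤ ((2*n/m) * ∑ i, x i ^ 2) * (z ω ⬝ᵥ z ω) :=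
            mul_le_mul_of_nonneg_right ht2 hzznn
        _ ≤ ((2*n/m) * ∑ i, x i ^ 2) * (2*n/m) := by
            apply mul_le_mul_of_nonneg_left _ (by positivity)
            rw [hzz_eq]; exact hω
        _ = (2*n/m) * ((2*n/m) * ∑ i, x i ^ 2) := by ring
    have hv_meas : Measurable fun ω => (z ω ⬝ᵥ x) ^ 2 * (z ω ⬝ᵥ z ω) := by
      have h1 : Measurable fun ω => z ω ⬝ᵥ x :=
        Finset.measurable_sum _ fun i _ => (hmeas i).mul_const (x i)
      have h2 : Measurable fun ω => z ω ⬝ᵥ z ω :=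
        Finset.measurable_sum _ fun i _ => (hmeas i).mul (hmeas i)
      exact (h1.pow_const 2).mul h2
    have hv_int : Integrable (fun ω => (z ω ⬝ᵥ x) ^ 2 * (z ω ⬝ᵥ z ω)) μ :=
      Integrable.mono' (integrable_const _) hv_meas.aestronglyMeasurable hv_bd
    have hv_le : ∫ ω, (z ω ⬝ᵥ x) ^ 2 * (z ω ⬝ᵥ z ω) ∂μ ≤ (2*n/m) * ((1/(m:ℝ)) * (x ⬝ᵥ g)) := by
      rw [← ht_val, ← integral_const_mul]
      apply integral_mono_ae hv_int (ht_int.const_mul _)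
      filter_upwards [hzsum] with ω hω
      rw [hzz_eq]
      calc (z ω ⬝ᵥ x) ^ 2 * (∑ i, z ω i ^ 2) ≤ (z ω ⬝ᵥ x) ^ 2 * (2*n/m) :=
            mul_le_mul_of_nonneg_left hω (sq_nonneg _)
        _ = (2*n/m) * (z ω ⬝ᵥ x) ^ 2 := by ring
    -- compute x ⬝ᵥ EE2 *ᵥ x
    have hEE2x : x ⬝ᵥ EE2 *ᵥ x
        = (1/(m:ℝ)) ^ 2 * (g ⬝ᵥ g) - 2 * (1/(m:ℝ)) * ((1/(m:ℝ)) * (g ⬝ᵥ g))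
          + ∫ ω, (z ω ⬝ᵥ x) ^ 2 * (z ω ⬝ᵥ z ω) ∂μ := by
      rw [hkey x]
      rw [show (fun ω => x ⬝ᵥ (E ω * E ω) *ᵥ x)
          = fun ω => (1/(m:ℝ)) ^ 2 * (g ⬝ᵥ g) - 2 * (1/(m:ℝ)) * ((z ω ⬝ᵥ x) * (g ⬝ᵥ z ω))
              + (z ω ⬝ᵥ x) ^ 2 * (z ω ⬝ᵥ z ω) from funext hQ]
      have hint1 : Integrable (fun ω => (1/(m:ℝ)) ^ 2 * (g ⬝ᵥ g)
          - 2 * (1/(m:ℝ)) * ((z ω ⬝ᵥ x) * (g ⬝ᵥ z ω))) μ :=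
        (integrable_const _).sub (hu_int.const_mul _)
      rw [integral_add hint1 hv_int,
        integral_sub (integrable_const _) (hu_int.const_mul _),
        integral_const, integral_const_mul, hu_val]
      simp [measure_univ]
    -- compute x ⬝ᵥ B *ᵥ x
    have hgg : x ⬝ᵥ (G * G) *ᵥ x = g ⬝ᵥ g := by
      rw [← Matrix.mulVec_mulVec, ← hg, Matrix.dotProduct_mulVec]
      congr 1
      conv_lhs => rw [← hGs]
      rw [Matrix.vecMul_transpose, ← hg]
    have hBx : x ⬝ᵥ B *ᵥ x = (1/(m:ℝ)^2) * (2 * n * (x ⬝ᵥ g) - g ⬝ᵥ g) := by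
      rw [hBdef, Matrix.smul_mulVec, dotProduct_smul, smul_eq_mul,
        Matrix.sub_mulVec, dotProduct_sub, Matrix.smul_mulVec,
        dotProduct_smul, smul_eq_mul, hgg, ← hg]
    -- final arithmetic
    rw [hEE2x, hBx]
    have hm2 : ((m:ℝ)) ≠ 0 := ne_of_gt hmr
    have e1 : (1/(m:ℝ)) ^ 2 * (g ⬝ᵥ g) - 2 * (1/(m:ℝ)) * ((1/(m:ℝ)) * (g ⬝ᵥ g))
        = -((1/(m:ℝ)^2) * (g ⬝ᵥ g)) := by ring
    have e2 : (2*(n:ℝ)/m) * ((1/(m:ℝ)) * (x ⬝ᵥ g)) = (1/(m:ℝ)^2) * (2 * n * (x ⬝ᵥ g)) := by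
      ring
    rw [e1]
    have := hv_le
    rw [e2] at this
    linarith [this]
  -- assemble part 1
  have hdiffpsd : (B - EE2).PosSemidef := by
    refine Matrix.PosSemidef.of_dotProduct_mulVec_nonneg ?_ ?_
    · rw [Matrix.IsHermitian, Matrix.conjTranspose_eq_transpose_of_trivial,
        Matrix.transpose_sub, hBs, hEE2s]
    · intro x
      rw [star_trivial]
      rw [Matrix.sub_mulVec, dotProduct_sub, sub_nonneg]
      exact hmain x
  refine ⟨hdiffpsd, ?_⟩
  -- part 2
  have hEE2psd : EE2.PosSemidef := by
    refine Matrix.PosSemidef.of_dotProduct_mulVec_nonneg ?_ ?_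
    · rw [Matrix.IsHermitian, Matrix.conjTranspose_eq_transpose_of_trivial, hEE2s]
    · intro x
      rw [star_trivial]
      exact hEE2quad x
  apply specNorm_le_of_quad hEE2psd (by positivity)
  intro x hx
  have hxs : ∑ i, x i ^ 2 = 1 := by rw [← eunorm_sq, hx]; norm_num
  have h1 : x ⬝ᵥ EE2 *ᵥ x ≤ x ⬝ᵥ B *ᵥ x := hmain x
  have hxg : x ⬝ᵥ (G *ᵥ x) ≤ n := by
    have := psd_quad_le_trace hG x
    rwa [htr, hxs, mul_one] at this
  have hggn : 0 ≤ (G *ᵥ x) ⬝ᵥ (G *ᵥ x) := Finset.sum_nonneg fun i _ => mul_self_nonneg _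
  have hgg : x ⬝ᵥ (G * G) *ᵥ x = (G *ᵥ x) ⬝ᵥ (G *ᵥ x) := by
    rw [← Matrix.mulVec_mulVec, Matrix.dotProduct_mulVec]
    congr 1
    conv_lhs => rw [← hGs]
    rw [Matrix.vecMul_transpose]
  have hBx : x ⬝ᵥ B *ᵥ x = (1/(m:ℝ)^2) * (2 * n * (x ⬝ᵥ (G *ᵥ x)) - (G *ᵥ x) ⬝ᵥ (G *ᵥ x)) := by
    rw [hBdef, Matrix.smul_mulVec, dotProduct_smul, smul_eq_mul,
      Matrix.sub_mulVec, dotProduct_sub, Matrix.smul_mulVec,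
      dotProduct_smul, smul_eq_mul, hgg]
  have h2 : x ⬝ᵥ B *ᵥ x ≤ 3 * n ^ 2 / m ^ 2 := by
    rw [hBx]
    have hb1 : 2 * (n:ℝ) * (x ⬝ᵥ (G *ᵥ x)) - (G *ᵥ x) ⬝ᵥ (G *ᵥ x) ≤ 2 * n * n := by
      have : 2 * (n:ℝ) * (x ⬝ᵥ (G *ᵥ x)) ≤ 2 * n * n :=
        mul_le_mul_of_nonneg_left hxg (by positivity)
      linarith
    calc (1/(m:ℝ)^2) * (2 * n * (x ⬝ᵥ (G *ᵥ x)) - (G *ᵥ x) ⬝ᵥ (G *ᵥ x))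
        ≤ (1/(m:ℝ)^2) * (2 * n * n) := mul_le_mul_of_nonneg_left hb1 (by positivity)
      _ ≤ 3 * n ^ 2 / m ^ 2 := by
          rw [div_eq_mul_one_div (3 * (n:ℝ)^2) ((m:ℝ)^2)]
          have : 2 * (n:ℝ) * n ≤ 3 * n ^ 2 := by nlinarith [hnn]
          calc (1/(m:ℝ)^2) * (2 * n * n) ≤ (1/(m:ℝ)^2) * (3 * n ^ 2) :=
                mul_le_mul_of_nonneg_left this (by positivity)
            _ = 3 * (n:ℝ) ^ 2 * (1 / (m:ℝ)^2) := by ring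
  linarith [h1, h2]
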